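/- Suppose U, V ∈ ℝ^{n×d} satisfy UV^T = M for a rank-d matrix M ∈ ℝ^{n×n}, and that U^T U = V^T V. Let M = U_M Σ V_M^T be the singular value decomposition of M. Then there exists an orthogonal matrix Q ∈ O(d) such that V = V_M Σ^{1/2} Q. -/

import Mathlib

open Matrix

theorem stmt_11 (n d : ℕ) (U V UM VM : Matrix (Fin n) (Fin d) ℝ)
    (s : Fin d → ℝ) (hs : ∀ i, 0 < s i)
    (M : Matrix (Fin n) (Fin n) ℝ)
    (hM : M = U * V.transpose) (hrank : M.rank = d)
    (hbal : U.transpose * U = V.transpose * V)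
    (hUM : UM.transpose * UM = 1) (hVM : VM.transpose * VM = 1)
    (hSVD : M = UM * Matrix.diagonal s * VM.transpose) :
    ∃ Q : Matrix (Fin d) (Fin d) ℝ, Q.transpose * Q = 1 ∧
      V = VM * Matrix.diagonal (fun i => Real.sqrt (s i)) * Q := by
  classical
  set Dr : Matrix (Fin d) (Fin d) ℝ := Matrix.diagonal (fun i => Real.sqrt (s i)) with hDr
  set Ds : Matrix (Fin d) (Fin d) ℝ := Matrix.diagonal s with hDs
  have hsr : ∀ i, Real.sqrt (s i) ≠ 0 := fun i => Real.sqrt_ne_zero'.mpr (hs i)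
  have hDrDr : Dr * Dr = Ds := by
    rw [hDr, hDs, diagonal_mul_diagonal]
    exact congrArg Matrix.diagonal (funext fun i => Real.mul_self_sqrt (hs i).le)
  set A : Matrix (Fin n) (Fin n) ℝ := V * Vᵀ with hA
  set B : Matrix (Fin n) (Fin n) ℝ := VM * Ds * VMᵀ with hB
  have hApsd : A.PosSemidef := by
    have := posSemidef_self_mul_conjTranspose V
    rwa [conjTranspose_eq_transpose_of_trivial] at this
  have hBfac : B = (VM * Dr) * (VM * Dr)ᵀ := by
    calc B = VM * (Dr * Dr) * VMᵀ := by rw [hDrDr, hB]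
    _ = (VM * Dr) * (Dr * VMᵀ) := by simp only [Matrix.mul_assoc]
    _ = (VM * Dr) * (VM * Dr)ᵀ := by
        rw [transpose_mul, hDr, diagonal_transpose]
  have hBpsd : B.PosSemidef := by
    rw [hBfac]
    have := posSemidef_self_mul_conjTranspose (VM * Dr)
    rwa [conjTranspose_eq_transpose_of_trivial] at this
  have hMM1 : Mᵀ * M = A * A := by
    calc Mᵀ * M = V * (Uᵀ * U) * Vᵀ := by
          rw [hM, transpose_mul, transpose_transpose]; simp only [Matrix.mul_assoc]
    _ = V * (Vᵀ * V) * Vᵀ := by rw [hbal]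
    _ = A * A := by rw [hA]; simp only [Matrix.mul_assoc]
  have hMM2 : Mᵀ * M = B * B := by
    calc Mᵀ * M = VM * Ds * (UMᵀ * UM) * (Ds * VMᵀ) := by
          rw [hSVD, transpose_mul, transpose_mul, transpose_transpose, hDs,
            diagonal_transpose]
          simp only [Matrix.mul_assoc]
    _ = VM * Ds * (VMᵀ * VM) * (Ds * VMᵀ) := by rw [hUM, hVM]
    _ = B * B := by rw [hB]; simp only [Matrix.mul_assoc]
  have hAB : A = B := by
    open scoped MatrixOrder Matrix.Norms.L2Operator in
    exact (CFC.sq_eq_sq_iff A B hApsd.nonneg hBpsd.nonneg).mp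
      (by rw [pow_two, pow_two, ← hMM1, ← hMM2])
  set W : Matrix (Fin d) (Fin d) ℝ := VMᵀ * V with hW
  have hWV : W * Vᵀ = Ds * VMᵀ := by
    calc W * Vᵀ = VMᵀ * (V * Vᵀ) := by rw [hW, Matrix.mul_assoc]
    _ = VMᵀ * (VM * Ds * VMᵀ) := by rw [← hA, hAB, hB]
    _ = (VMᵀ * VM) * (Ds * VMᵀ) := by simp only [Matrix.mul_assoc]
    _ = Ds * VMᵀ := by rw [hVM, Matrix.one_mul]
  have hVWt : V * Wᵀ = VM * Ds := by
    calc V * Wᵀ = (V * Vᵀ) * VM := by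
          rw [hW, transpose_mul, transpose_transpose, Matrix.mul_assoc]
    _ = VM * Ds * (VMᵀ * VM) := by rw [← hA, hAB, hB]; simp only [Matrix.mul_assoc]
    _ = VM * Ds := by rw [hVM, Matrix.mul_one]
  have hWW : W * Wᵀ = Ds := by
    calc W * Wᵀ = VMᵀ * (V * Wᵀ) := by rw [hW, Matrix.mul_assoc]
    _ = (VMᵀ * VM) * Ds := by rw [hVWt, Matrix.mul_assoc]
    _ = Ds := by rw [hVM, Matrix.one_mul]
  have hVVM : V = VM * W := by
    have h0 : (V - VM * W) * (V - VM * W)ᵀ = 0 := by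
      have e1 : V * (Wᵀ * VMᵀ) = V * Vᵀ := by
        rw [← Matrix.mul_assoc, hVWt, ← hB, ← hAB, hA]
      have e2 : VM * W * Vᵀ = V * Vᵀ := by
        rw [Matrix.mul_assoc, hWV, ← Matrix.mul_assoc, ← hB, ← hAB, hA]
      have e3 : VM * W * (Wᵀ * VMᵀ) = V * Vᵀ := by
        calc VM * W * (Wᵀ * VMᵀ) = VM * (W * Wᵀ) * VMᵀ := by
              simp only [Matrix.mul_assoc]
        _ = V * Vᵀ := by rw [hWW, ← hB, ← hAB, hA]
      rw [transpose_sub, transpose_mul, Matrix.sub_mul, Matrix.mul_sub, Matrix.mul_sub,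
        e1, e2, e3]
      abel
    have h0' : (V - VM * W) * (V - VM * W)ᴴ = 0 := by
      rwa [conjTranspose_eq_transpose_of_trivial]
    rw [self_mul_conjTranspose_eq_zero, sub_eq_zero] at h0'
    exact h0'
  set Di : Matrix (Fin d) (Fin d) ℝ := Matrix.diagonal (fun i => (Real.sqrt (s i))⁻¹)
    with hDi
  have hDrDi : Dr * Di = 1 := by
    rw [hDr, hDi, diagonal_mul_diagonal, ← diagonal_one]
    exact congrArg Matrix.diagonal (funext fun i => mul_inv_cancel₀ (hsr i))
  refine ⟨Di * W, ?_, ?_⟩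
  · rw [mul_eq_one_comm]
    calc Di * W * (Di * W)ᵀ = Di * (W * Wᵀ) * Di := by
          rw [transpose_mul, hDi, diagonal_transpose]; simp only [Matrix.mul_assoc]
    _ = Di * (Dr * Dr) * Di := by rw [hWW, ← hDrDr]
    _ = (Di * Dr) * (Dr * Di) := by simp only [Matrix.mul_assoc]
    _ = 1 := by rw [hDrDi, mul_eq_one_comm.mp hDrDi, Matrix.one_mul]
  · calc V = VM * W := hVVM
    _ = VM * ((Dr * Di) * W) := by rw [hDrDi, Matrix.one_mul]
    _ = VM * Dr * (Di * W) := by simp only [Matrix.mul_assoc]
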